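/- Let M be a finite MDP, ε > 0, and let (T, B) be a maximal end component of M. If there exists a state s ∈ T with P^max[Reach {s}] ≥ ε, then T ⊆ C for every ε-core C of M. -/

import Mathlib

open MeasureTheory

/-- A Markov decision process: an initial state, a non-empty finite set of available
actions at each state, and for each state and action a distribution over successors. -/
structure MDP (S : Type*) (A : Type*) where
  init : S
  avail : S → Finset A
  avail_nonempty : ∀ s, (avail s).Nonempty
  trans : S → A → PMF S

/-- The space of infinite paths `s₀ a₀ s₁ a₁ ⋯`; coordinate `i` is the pair `(sᵢ, aᵢ)`. -/
def Traj (S : Type*) (A : Type*) := ℕ → S × A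

instance {S A : Type*} : MeasurableSpace (Traj S A) :=
  @MeasurableSpace.pi ℕ (fun _ => S × A) (fun _ => ⊤)

/-- A strategy: to each finite history `s₀ a₀ … s_{k-1} a_{k-1}` and current state `s_k` it
assigns a probability distribution over the actions available at `s_k`. -/
structure Strategy {S A : Type*} (M : MDP S A) where
  act : List (S × A) → S → PMF A
  mem_avail : ∀ h s a, a ∈ (act h s).support → a ∈ M.avail s

variable {S A : Type*}

/-- The probability, starting in state `s` after history `h`, that the path continues with
exactly the finite sequence `pre` of (state, action) pairs. -/
noncomputable def cylProb [DecidableEq S] (M : MDP S A) (σ : Strategy M) :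
    List (S × A) → S → List (S × A) → ENNReal
  | _, _, [] => 1
  | h, s, (t, a) :: rest =>
      (if t = s then (σ.act h s) a else 0) *
        ∑' s' : S, (M.trans s a) s' * cylProb M σ (h ++ [(t, a)]) s' rest

/-- The cylinder set of all infinite paths whose first coordinates agree with `pre`. -/
def Cyl (pre : List (S × A)) : Set (Traj S A) :=
  {ω | ∀ i : Fin pre.length, ω i = pre.get i}

/-- `P` is the family of path measures induced (via the Ionescu–Tulcea construction) by the
strategies and start states of `M`: each `P σ s` is a probability measure on infinite paths
whose value on every cylinder is the product of strategy- and transition-probabilities. -/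
def IsPathMeasure [DecidableEq S] (M : MDP S A)
    (P : Strategy M → S → Measure (Traj S A)) : Prop :=
  (∀ σ s, IsProbabilityMeasure (P σ s)) ∧
    ∀ σ s pre, P σ s (Cyl pre) = cylProb M σ [] s pre

/-- `P^max_s[E]`, the supremum over all strategies of the probability of `E`. -/
noncomputable def pmax (M : MDP S A) (P : Strategy M → S → Measure (Traj S A))
    (s : S) (E : Set (Traj S A)) : ENNReal :=
  ⨆ σ : Strategy M, P σ s E

/-- `P^min_s[E]`, the infimum over all strategies of the probability of `E`. -/
noncomputable def pmin (M : MDP S A) (P : Strategy M → S → Measure (Traj S A))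
    (s : S) (E : Set (Traj S A)) : ENNReal :=
  ⨅ σ : Strategy M, P σ s E

/-- The set of paths that visit `R` at some point. -/
def Reach (R : Set S) : Set (Traj S A) := {ω | ∃ i, (ω i).1 ∈ R}

/-- The set of paths that stay in `C` forever. -/
def Stay (C : Set S) : Set (Traj S A) := {ω | ∀ i, (ω i).1 ∈ C}

/-- The set of paths that visit `R` within the first `n` steps. -/
def ReachN (n : ℕ) (R : Set S) : Set (Traj S A) := {ω | ∃ i ≤ n, (ω i).1 ∈ R}

/-- The set of paths that stay in `C` for the first `n` steps. -/
def StayN (n : ℕ) (C : Set S) : Set (Traj S A) := {ω | ∀ i ≤ n, (ω i).1 ∈ C}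

/-- `C` is an `ε`-core: the maximal probability of ever leaving `C` is `< ε`. -/
def IsCore [DecidableEq S] (M : MDP S A) (P : Strategy M → S → Measure (Traj S A))
    (ε : ℝ) (C : Set S) : Prop :=
  pmax M P M.init (Reach Cᶜ) < ENNReal.ofReal ε

/-- `C` is an `n`-step `ε`-core: the maximal probability of leaving `C` within `n` steps
is `< ε`. -/
def IsNCore [DecidableEq S] (M : MDP S A) (P : Strategy M → S → Measure (Traj S A))
    (n : ℕ) (ε : ℝ) (C : Set S) : Prop :=
  pmax M P M.init (ReachN n Cᶜ) < ENNReal.ofReal ε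

/-- `(T, B)` is an end component of `M`: `T` and `B` are non-empty, every action of `B` is
available in some state of `T`, actions of `B` never leave `T`, and any two states of `T`
are connected by a finite path staying inside `T` and using only actions of `B`. -/
def IsEndComponent {S A : Type*} (M : MDP S A) (T : Set S) (B : Set A) : Prop :=
  T.Nonempty ∧ B.Nonempty ∧
    (B ⊆ ⋃ s ∈ T, (M.avail s : Set A)) ∧
    (∀ s ∈ T, ∀ a ∈ B, a ∈ M.avail s → (M.trans s a).support ⊆ T) ∧
    ∀ s ∈ T, ∀ s' ∈ T,
      Relation.ReflTransGen
        (fun x y => x ∈ T ∧ ∃ a ∈ B, a ∈ M.avail x ∧ y ∈ (M.trans x a).support) s s'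

/-- `(T, B)` is a maximal end component (MEC) of `M`. -/
def IsMEC {S A : Type*} (M : MDP S A) (T : Set S) (B : Set A) : Prop :=
  IsEndComponent M T B ∧
    ∀ T' B', IsEndComponent M T' B' → T ⊆ T' → B ⊆ B' → T' = T ∧ B' = B


/-! ### Auxiliary development -/

section Aux

open scoped Classical

variable [Fintype S] [Fintype A] [DecidableEq S]

/-- Step-bounded reachability probability of `R` under strategy `σ`,
starting at `u` with history `h`. -/
noncomputable def rpS (M : MDP S A) (σ : Strategy M) (R : Set S) :
    ℕ → List (S × A) → S → ENNReal
  | 0, _, u => if u ∈ R then 1 else 0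
  | n + 1, h, u =>
      if u ∈ R then 1
      else ∑ a : A, (σ.act h u) a *
        ∑ u' : S, (M.trans u a) u' * rpS M σ R n (h ++ [(u, a)]) u'

/-- Memoryless step-bounded reachability probability. -/
noncomputable def rpM (M : MDP S A) (p : S → PMF A) (R : Set S) : ℕ → S → ENNReal
  | 0, u => if u ∈ R then 1 else 0
  | n + 1, u =>
      if u ∈ R then 1
      else ∑ a : A, (p u) a * ∑ u' : S, (M.trans u a) u' * rpM M p R n u'

/-- Memoryless step-bounded miss probability. -/
noncomputable def mpM (M : MDP S A) (p : S → PMF A) (R : Set S) : ℕ → S → ENNReal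
  | 0, u => if u ∈ R then 0 else 1
  | n + 1, u =>
      if u ∈ R then 0
      else ∑ a : A, (p u) a * ∑ u' : S, (M.trans u a) u' * mpM M p R n u'

variable {M : MDP S A}

lemma pmf_sum_one (p : PMF A) : ∑ a : A, p a = 1 := by
  rw [← p.tsum_coe, tsum_fintype]

lemma pmf_sum_one' (p : PMF S) : ∑ u : S, p u = 1 := by
  rw [← p.tsum_coe, tsum_fintype]

lemma rpS_le_one (σ : Strategy M) (R : Set S) :
    ∀ n h u, rpS M σ R n h u ≤ 1 := by
  intro n
  induction n with
  | zero => intro h u; simp only [rpS]; split <;> simp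
  | succ n ih =>
      intro h u
      simp only [rpS]
      split
      · exact le_rfl
      · calc ∑ a : A, (σ.act h u) a * ∑ u' : S, (M.trans u a) u' * rpS M σ R n (h ++ [(u, a)]) u'
            ≤ ∑ a : A, (σ.act h u) a * 1 := by
              refine Finset.sum_le_sum fun a _ => ?_
              refine mul_le_mul_right ?_ _
              calc ∑ u' : S, (M.trans u a) u' * rpS M σ R n (h ++ [(u, a)]) u'
                  ≤ ∑ u' : S, (M.trans u a) u' * 1 :=
                    Finset.sum_le_sum fun u' _ => mul_le_mul_right (ih _ u') _
                _ = 1 := by simp [pmf_sum_one' (M.trans u a)]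
          _ = 1 := by simp [pmf_sum_one (σ.act h u)]

lemma rpM_le_one (p : S → PMF A) (R : Set S) :
    ∀ n u, rpM M p R n u ≤ 1 := by
  intro n
  induction n with
  | zero => intro u; simp only [rpM]; split <;> simp
  | succ n ih =>
      intro u
      simp only [rpM]
      split
      · exact le_rfl
      · calc ∑ a : A, (p u) a * ∑ u' : S, (M.trans u a) u' * rpM M p R n u'
            ≤ ∑ a : A, (p u) a * 1 := by
              refine Finset.sum_le_sum fun a _ => ?_
              refine mul_le_mul_right ?_ _
              calc ∑ u' : S, (M.trans u a) u' * rpM M p R n u'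
                  ≤ ∑ u' : S, (M.trans u a) u' * 1 :=
                    Finset.sum_le_sum fun u' _ => mul_le_mul_right (ih u') _
                _ = 1 := by simp [pmf_sum_one' (M.trans u a)]
          _ = 1 := by simp [pmf_sum_one (p u)]

lemma rpM_mono_succ (p : S → PMF A) (R : Set S) :
    ∀ n u, rpM M p R n u ≤ rpM M p R (n + 1) u := by
  intro n
  induction n with
  | zero =>
      intro u; simp only [rpM]; split
      · exact le_rfl
      · simp
  | succ n ih =>
      intro u
      conv_lhs => rw [rpM]
      conv_rhs => rw [rpM]
      split
      · exact le_rfl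
      · refine Finset.sum_le_sum fun a _ => mul_le_mul_right ?_ _
        exact Finset.sum_le_sum fun u' _ => mul_le_mul_right (ih u') _

lemma rpM_mono (p : S → PMF A) (R : Set S) {m n : ℕ} (hmn : m ≤ n) (u : S) :
    rpM M p R m u ≤ rpM M p R n u := by
  induction n with
  | zero => simpa [Nat.le_zero.mp hmn] using le_rfl
  | succ n ih =>
      rcases Nat.lt_or_ge m (n+1) with h | h
      · exact (ih (Nat.lt_succ_iff.mp h)).trans (rpM_mono_succ p R n u)
      · have : m = n + 1 := le_antisymm hmn h
        simp [this]

lemma rpM_add_mpM (p : S → PMF A) (R : Set S) :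
    ∀ n u, rpM M p R n u + mpM M p R n u = 1 := by
  intro n
  induction n with
  | zero => intro u; simp only [rpM, mpM]; split <;> simp
  | succ n ih =>
      intro u
      simp only [rpM, mpM]
      split
      · simp
      · rw [← Finset.sum_add_distrib]
        calc ∑ a : A, ((p u) a * ∑ u' : S, (M.trans u a) u' * rpM M p R n u'
              + (p u) a * ∑ u' : S, (M.trans u a) u' * mpM M p R n u')
            = ∑ a : A, (p u) a * 1 := by
              refine Finset.sum_congr rfl fun a _ => ?_
              rw [← mul_add, ← Finset.sum_add_distrib]
              congr 1
              calc ∑ u' : S, ((M.trans u a) u' * rpM M p R n u'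
                    + (M.trans u a) u' * mpM M p R n u')
                  = ∑ u' : S, (M.trans u a) u' * 1 := by
                    refine Finset.sum_congr rfl fun u' _ => ?_
                    rw [← mul_add, ih u']
                _ = 1 := by simp [pmf_sum_one' (M.trans u a)]
          _ = 1 := by simp [pmf_sum_one (p u)]

lemma mpM_le_one (p : S → PMF A) (R : Set S) (n : ℕ) (u : S) :
    mpM M p R n u ≤ 1 :=
  le_trans (le_add_self.trans_eq (rpM_add_mpM p R n u)) le_rfl

lemma mpM_mem (p : S → PMF A) (R : Set S) (n : ℕ) (u : S) (hu : u ∈ R) :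
    mpM M p R n u = 0 := by
  cases n <;> simp [mpM, hu]


/-- Memoryless strategy built from a state-indexed family of PMFs. -/
noncomputable def mlStrat (M : MDP S A) (p : S → PMF A)
    (hp : ∀ u a, a ∈ (p u).support → a ∈ M.avail u) : Strategy M where
  act _ u := p u
  mem_avail _ u a ha := hp u a ha

/-- Play `σ` until the state `s` is visited, then switch to the memoryless strategy `p`. -/
noncomputable def switchStrat (M : MDP S A) (σ : Strategy M) (p : S → PMF A)
    (hp : ∀ u a, a ∈ (p u).support → a ∈ M.avail u) (s : S) : Strategy M where
  act h u := if s ∈ h.map Prod.fst ∨ u = s then p u else σ.act h u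
  mem_avail h u a ha := by
    by_cases hc : s ∈ h.map Prod.fst ∨ u = s
    · rw [if_pos hc] at ha; exact hp u a ha
    · rw [if_neg hc] at ha; exact σ.mem_avail h u a ha

lemma rpS_switch_after (σ : Strategy M) (p : S → PMF A)
    (hp : ∀ u a, a ∈ (p u).support → a ∈ M.avail u) (s : S) (R : Set S) :
    ∀ n h u, (s ∈ h.map Prod.fst ∨ u = s) →
      rpS M (switchStrat M σ p hp s) R n h u = rpM M p R n u := by
  intro n
  induction n with
  | zero => intro h u _; simp [rpS, rpM]
  | succ n ih =>
      intro h u hcond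
      simp only [rpS, rpM]
      split
      · rfl
      · have hact : (switchStrat M σ p hp s).act h u = p u := by
          simp only [switchStrat, if_pos hcond]
        rw [hact]
        refine Finset.sum_congr rfl fun a _ => ?_
        congr 1
        refine Finset.sum_congr rfl fun u' _ => ?_
        congr 1
        refine ih (h ++ [(u, a)]) u' (Or.inl ?_)
        rcases hcond with hh | rfl
        · simp [hh]
        · simp

lemma rpS_switch_before (σ : Strategy M) (p : S → PMF A)
    (hp : ∀ u a, a ∈ (p u).support → a ∈ M.avail u) (s : S) :
    ∀ n h u, s ∉ h.map Prod.fst →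
      rpS M (switchStrat M σ p hp s) ({s} : Set S) n h u = rpS M σ ({s} : Set S) n h u := by
  intro n
  induction n with
  | zero => intro h u _; rfl
  | succ n ih =>
      intro h u hh
      simp only [rpS]
      split
      · rfl
      · rename_i hus
        have hus' : u ≠ s := by simpa using hus
        have hact : (switchStrat M σ p hp s).act h u = σ.act h u := by
          simp only [switchStrat, if_neg (by simp [hh, hus'] : ¬(s ∈ h.map Prod.fst ∨ u = s))]
        rw [hact]
        refine Finset.sum_congr rfl fun a _ => ?_
        congr 1
        refine Finset.sum_congr rfl fun u' _ => ?_
        congr 1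
        refine ih (h ++ [(u, a)]) u' ?_
        simp [hus'.symm, hh]

/-- Main inequality: the probability for the switched strategy to reach `t` within `n + m`
steps is at least (prob. to reach `s` within `n` steps) × (memoryless prob. to reach `t`
from `s` within `m` steps). -/
lemma rpS_switch_main (σ : Strategy M) (p : S → PMF A)
    (hp : ∀ u a, a ∈ (p u).support → a ∈ M.avail u) (s t : S) :
    ∀ n m h u, s ∉ h.map Prod.fst →
      rpS M σ ({s} : Set S) n h u * rpM M p ({t} : Set S) m s ≤
        rpS M (switchStrat M σ p hp s) ({t} : Set S) (n + m) h u := by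
  intro n
  induction n with
  | zero =>
      intro m h u hh
      by_cases hus : u = s
      · subst hus
        have h0 : rpS M σ ({u} : Set S) 0 h u = 1 := by simp [rpS]
        rw [h0, one_mul, Nat.zero_add,
          rpS_switch_after σ p hp u ({t} : Set S) m h u (Or.inr rfl)]
      · have h0 : rpS M σ ({s} : Set S) 0 h u = 0 := by simp [rpS, hus]
        simp [h0]
  | succ n ih =>
      intro m h u hh
      by_cases hut : u = t
      · subst hut
        have : rpS M (switchStrat M σ p hp s) ({u} : Set S) (n + 1 + m) h u = 1 := by
          cases n + 1 + m <;> simp [rpS]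
        rw [this]
        exact mul_le_one' (rpS_le_one σ _ _ _ _) (rpM_le_one p _ _ _)
      by_cases hus : u = s
      · subst hus
        have h1 : rpS M σ ({u} : Set S) (n + 1) h u = 1 := by simp [rpS]
        rw [h1, one_mul,
          rpS_switch_after σ p hp u ({t} : Set S) (n + 1 + m) h u (Or.inr rfl)]
        exact rpM_mono p _ (by omega) u
      · -- u ∉ {s, t}
        have hss : (u : S) ∉ ({s} : Set S) := by simp [hus]
        have htt : (u : S) ∉ ({t} : Set S) := by simp [hut]
        have hrw : n + 1 + m = (n + m) + 1 := by omega
        rw [hrw]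
        conv_lhs => rw [rpS]
        conv_rhs => rw [rpS]
        rw [if_neg hss, if_neg htt, Finset.sum_mul]
        have hact : (switchStrat M σ p hp s).act h u = σ.act h u := by
          simp only [switchStrat, if_neg (by simp [hh, hus] : ¬(s ∈ h.map Prod.fst ∨ u = s))]
        rw [hact]
        refine Finset.sum_le_sum fun a _ => ?_
        rw [mul_assoc]
        refine mul_le_mul_right ?_ ((σ.act h u) a)
        rw [Finset.sum_mul]
        refine Finset.sum_le_sum fun u' _ => ?_
        rw [mul_assoc]
        refine mul_le_mul_right ?_ ((M.trans u a) u')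
        exact ih m (h ++ [(u, a)]) u' (by simp [hh, Ne.symm hus])


/-- Uniform PMF over the actions of `B` available at `u` (or all available actions
if none are). -/
noncomputable def ecPMF (M : MDP S A) (B : Set A) (u : S) : PMF A :=
  if h : (M.avail u ∩ Finset.univ.filter (· ∈ B)).Nonempty then PMF.uniformOfFinset _ h
  else PMF.uniformOfFinset (M.avail u) (M.avail_nonempty u)

lemma ecPMF_avail (B : Set A) : ∀ u a, a ∈ (ecPMF M B u).support → a ∈ M.avail u := by
  intro u a ha
  unfold ecPMF at ha
  split at ha
  · rw [PMF.support_uniformOfFinset] at ha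
    exact (Finset.mem_inter.mp ha).1
  · rw [PMF.support_uniformOfFinset] at ha
    exact ha

section EC

variable {T : Set S} {B : Set A} (hEC : IsEndComponent M T B)
include hEC

lemma ec_inter_nonempty {u : S} (hu : u ∈ T) :
    (M.avail u ∩ Finset.univ.filter (· ∈ B)).Nonempty := by
  obtain ⟨-, ⟨b, hb⟩, hBav, -, hconn⟩ := hEC
  obtain ⟨x, hxT, hbx⟩ := by
    have := hBav hb
    simpa using this
  have hux := hconn u hu x hxT
  rcases (Relation.ReflTransGen.cases_head hux) with rfl | ⟨c, ⟨-, a, haB, haAv, -⟩, -⟩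
  · exact ⟨b, by simp [hbx, hb]⟩
  · exact ⟨a, by simp [haAv, haB]⟩

lemma ecPMF_mem {u : S} (hu : u ∈ T) {a : A} (ha : a ∈ (ecPMF M B u).support) :
    a ∈ B ∧ a ∈ M.avail u := by
  unfold ecPMF at ha
  rw [dif_pos (ec_inter_nonempty hEC hu)] at ha
  rw [PMF.support_uniformOfFinset] at ha
  have := Finset.mem_inter.mp ha
  exact ⟨by simpa using this.2, this.1⟩

lemma ecPMF_pos {u : S} (hu : u ∈ T) {a : A} (haB : a ∈ B) (haAv : a ∈ M.avail u) :
    0 < (ecPMF M B u) a := by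
  have hmem : a ∈ (ecPMF M B u).support := by
    unfold ecPMF
    rw [dif_pos (ec_inter_nonempty hEC hu), PMF.support_uniformOfFinset]
    simp [haAv, haB]
  exact pos_iff_ne_zero.mpr (PMF.mem_support_iff _ a |>.mp hmem)

/-- From any state of the end component, the target `t ∈ T` is reached with positive
probability in some number of steps under the uniform EC strategy. -/
lemma ec_reach_pos {t : S} (ht : t ∈ T) {u : S} (hu : u ∈ T) :
    ∃ n, 0 < rpM M (ecPMF M B) ({t} : Set S) n u := by
  have hconn := hEC.2.2.2.2 u hu t ht
  induction hconn using Relation.ReflTransGen.head_induction_on with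
  | refl => exact ⟨0, by simp [rpM]⟩
  | head hstep _ ih =>
      rename_i x c _
      obtain ⟨hxT, a, haB, haAv, hc⟩ := hstep
      obtain ⟨n, hn⟩ := ih (hEC.2.2.2.1 x hxT a haB haAv hc)
      by_cases hxt : x = t
      · exact ⟨0, by simp [rpM, hxt]⟩
      · refine ⟨n + 1, ?_⟩
        have hxt' : (x : S) ∉ ({t} : Set S) := by simp [hxt]
        rw [rpM, if_neg hxt']
        have key : 0 < (ecPMF M B x) a * ∑ u' : S, (M.trans x a) u' * rpM M (ecPMF M B) ({t} : Set S) n u' := by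
          refine ENNReal.mul_pos (ne_of_gt (ecPMF_pos hEC hxT haB haAv)) ?_
          refine ne_of_gt (lt_of_lt_of_le ?_ (Finset.single_le_sum (fun i _ => zero_le) (Finset.mem_univ c)))
          exact ENNReal.mul_pos (PMF.mem_support_iff _ c |>.mp hc) (ne_of_gt hn)
        calc (0 : ENNReal) < _ := key
          _ ≤ _ := Finset.single_le_sum
            (f := fun a' => (ecPMF M B x) a' *
              ∑ u' : S, (M.trans x a') u' * rpM M (ecPMF M B) ({t} : Set S) n u')
            (fun i _ => zero_le) (Finset.mem_univ a)

/-- Decomposition bound for the miss probability. -/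
lemma ec_mp_decomp {t : S} (b : ℕ) :
    ∀ a u, u ∈ T →
      mpM M (ecPMF M B) ({t} : Set S) (a + b) u ≤
        mpM M (ecPMF M B) ({t} : Set S) a u *
          (Finset.univ.filter (· ∈ T)).sup (mpM M (ecPMF M B) ({t} : Set S) b) := by
  set p := ecPMF M B
  set K := (Finset.univ.filter (· ∈ T)).sup (mpM M p ({t} : Set S) b) with hK
  intro a
  induction a with
  | zero =>
      intro u hu
      by_cases hut : u = t
      · rw [Nat.zero_add, mpM_mem p _ b u (by simp [hut])]
        exact zero_le
      · have h0 : mpM M p ({t} : Set S) 0 u = 1 := by simp [mpM, hut]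
        rw [Nat.zero_add, h0, one_mul]
        exact Finset.le_sup (by simp [hu])
  | succ a ih =>
      intro u hu
      by_cases hut : u = t
      · rw [mpM_mem p _ _ u (by simp [hut])]
        exact zero_le
      · have hut' : (u : S) ∉ ({t} : Set S) := by simp [hut]
        have hrw : a + 1 + b = (a + b) + 1 := by omega
        rw [hrw]
        conv_lhs => rw [mpM, if_neg hut']
        conv_rhs => rw [mpM, if_neg hut', Finset.sum_mul]
        refine Finset.sum_le_sum fun c _ => ?_
        by_cases hc : (p u) c = 0
        · simp [hc]
        rw [mul_assoc]
        refine mul_le_mul_right ?_ ((p u) c)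
        rw [Finset.sum_mul]
        refine Finset.sum_le_sum fun u' _ => ?_
        rw [mul_assoc]
        by_cases hu' : (M.trans u c) u' = 0
        · simp [hu']
        refine mul_le_mul_right ?_ ((M.trans u c) u')
        have hcB : c ∈ B ∧ c ∈ M.avail u := ecPMF_mem hEC hu (PMF.mem_support_iff _ c |>.mpr hc)
        have hu'T : u' ∈ T := hEC.2.2.2.1 u hu c hcB.1 hcB.2 (PMF.mem_support_iff _ u' |>.mpr hu')
        exact ih u' hu'T

/-- The miss probability from a state of the end component becomes arbitrarily small. -/
lemma ec_mp_small {t : S} (ht : t ∈ T) {s : S} (hsT : s ∈ T) {η : ENNReal} (hη : 0 < η) :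
    ∃ m, mpM M (ecPMF M B) ({t} : Set S) m s < η := by
  have hex : ∀ u : S, ∃ n, u ∈ T → 0 < rpM M (ecPMF M B) ({t} : Set S) n u := by
    intro u
    by_cases hu : u ∈ T
    · obtain ⟨n, hn⟩ := ec_reach_pos hEC ht hu
      exact ⟨n, fun _ => hn⟩
    · exact ⟨0, fun h => absurd h hu⟩
  choose f hf using hex
  set N := Finset.univ.sup f with hN
  have hrp : ∀ u ∈ T, 0 < rpM M (ecPMF M B) ({t} : Set S) N u := fun u hu =>
    lt_of_lt_of_le (hf u hu) (rpM_mono _ _ (Finset.le_sup (Finset.mem_univ u)) u)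
  set q := (Finset.univ.filter (· ∈ T)).sup (mpM M (ecPMF M B) ({t} : Set S) N) with hq
  have hq1 : q < 1 := by
    rw [hq, Finset.sup_lt_iff (by norm_num : (⊥ : ENNReal) < 1)]
    intro v hv
    have hvT : v ∈ T := by simpa using hv
    have hsum := rpM_add_mpM (M := M) (ecPMF M B) ({t} : Set S) N v
    calc mpM M (ecPMF M B) ({t} : Set S) N v
        < mpM M (ecPMF M B) ({t} : Set S) N v + rpM M (ecPMF M B) ({t} : Set S) N v :=
          ENNReal.lt_add_right
            (ne_top_of_le_ne_top ENNReal.one_ne_top (mpM_le_one _ _ _ _))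
            (ne_of_gt (hrp v hvT))
      _ = 1 := by rw [add_comm]; exact hsum
  have hpow : ∀ k, ∀ u ∈ T, mpM M (ecPMF M B) ({t} : Set S) (k * N) u ≤ q ^ k := by
    intro k
    induction k with
    | zero => intro u hu; simpa using mpM_le_one (M := M) (ecPMF M B) ({t} : Set S) 0 u
    | succ k ih =>
        intro u hu
        have hmul : (k + 1) * N = N + k * N := by ring
        rw [hmul]
        calc mpM M (ecPMF M B) ({t} : Set S) (N + k * N) u
            ≤ mpM M (ecPMF M B) ({t} : Set S) N u *
                (Finset.univ.filter (· ∈ T)).sup (mpM M (ecPMF M B) ({t} : Set S) (k * N)) :=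
              ec_mp_decomp hEC (k * N) N u hu
          _ ≤ q * q ^ k := by
              refine mul_le_mul' (Finset.le_sup (by simp [hu])) ?_
              refine Finset.sup_le fun v hv => ih v (by simpa using hv)
          _ = q ^ (k + 1) := by rw [pow_succ, mul_comm]
  obtain ⟨k, hk⟩ : ∃ k, q ^ k < η := by
    have htend := ENNReal.tendsto_pow_atTop_nhds_zero_of_lt_one hq1
    exact (htend.eventually_lt_const hη).exists
  exact ⟨k * N, lt_of_le_of_lt (hpow k s hsT) hk⟩

end EC

section Bridge

lemma sum_pi_fin_succ {X : Type*} [Fintype X] {M' : Type*} [AddCommMonoid M']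
    (k : ℕ) (g : (Fin (k + 1) → X) → M') :
    ∑ v : Fin (k + 1) → X, g v = ∑ x : X, ∑ w : Fin k → X, g (Fin.cons x w) := by
  rw [← Equiv.sum_comp (Fin.consEquiv fun _ => X) g, Fintype.sum_prod_type]
  rfl

variable (σ : Strategy M)

lemma cylProb_head_ne (h : List (S × A)) (u : S) (x : S × A) (l : List (S × A))
    (hx : x.1 ≠ u) : cylProb M σ h u (x :: l) = 0 := by
  obtain ⟨t, a⟩ := x
  simp only [cylProb]
  rw [if_neg hx, zero_mul]

lemma cylProb_total : ∀ k (h : List (S × A)) (u : S),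
    ∑ v : Fin k → S × A, cylProb M σ h u (List.ofFn v) = 1 := by
  intro k
  induction k with
  | zero =>
      intro h u
      haveI : Unique (Fin 0 → S × A) := ⟨⟨fun i => i.elim0⟩, fun f => funext fun i => i.elim0⟩
      rw [Fintype.sum_unique]
      simp [cylProb]
  | succ k ih =>
      intro h u
      rw [sum_pi_fin_succ]
      have hterm : ∀ x : S × A, ∀ w : Fin k → S × A,
          cylProb M σ h u (List.ofFn (Fin.cons x w)) =
            (if x.1 = u then (σ.act h u) x.2 else 0) *
              ∑ s' : S, (M.trans u x.2) s' * cylProb M σ (h ++ [x]) s' (List.ofFn w) := by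
        intro x w
        obtain ⟨t, a⟩ := x
        rw [List.ofFn_succ]
        simp only [Fin.cons_zero, Fin.cons_succ, cylProb, tsum_fintype]
      calc ∑ x : S × A, ∑ w : Fin k → S × A, cylProb M σ h u (List.ofFn (Fin.cons x w))
          = ∑ x : S × A, (if x.1 = u then (σ.act h u) x.2 else 0) := by
            refine Finset.sum_congr rfl fun x _ => ?_
            rw [Finset.sum_congr rfl fun w _ => hterm x w, ← Finset.mul_sum]
            rw [Finset.sum_comm]
            have : ∀ s' : S, ∑ w : Fin k → S × A,
                (M.trans u x.2) s' * cylProb M σ (h ++ [x]) s' (List.ofFn w) =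
                (M.trans u x.2) s' := by
              intro s'
              rw [← Finset.mul_sum, ih (h ++ [x]) s', mul_one]
            rw [Finset.sum_congr rfl fun s' _ => this s', pmf_sum_one' (M.trans u x.2), mul_one]
        _ = 1 := by
            rw [Fintype.sum_prod_type]
            rw [Finset.sum_comm]
            simp only [Finset.sum_ite_eq', Finset.mem_univ, if_true]
            exact pmf_sum_one (σ.act h u)

lemma sum_hit_eq_rpS (R : Set S) : ∀ n (h : List (S × A)) (u : S),
    (∑ v : Fin (n + 1) → S × A,
      if ∃ i, (v i).1 ∈ R then cylProb M σ h u (List.ofFn v) else 0) = rpS M σ R n h u := by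
  intro n
  induction n with
  | zero =>
      intro h u
      by_cases hu : u ∈ R
      · have hpt : ∀ v : Fin 1 → S × A,
            (if ∃ i, (v i).1 ∈ R then cylProb M σ h u (List.ofFn v) else 0) =
              cylProb M σ h u (List.ofFn v) := by
          intro v
          by_cases hhit : ∃ i : Fin 1, (v i).1 ∈ R
          · rw [if_pos hhit]
          · rw [if_neg hhit]
            have h0 : (v 0).1 ∉ R := fun hc => hhit ⟨0, hc⟩
            have hne : (v 0).1 ≠ u := fun hc => h0 (hc ▸ hu)
            rw [List.ofFn_succ, cylProb_head_ne σ _ _ _ _ hne]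
        rw [Finset.sum_congr rfl fun v _ => hpt v, cylProb_total σ 1 h u]
        simp [rpS, hu]
      · have hpt : ∀ v : Fin 1 → S × A,
            (if ∃ i, (v i).1 ∈ R then cylProb M σ h u (List.ofFn v) else 0) = 0 := by
          intro v
          by_cases hhit : ∃ i : Fin 1, (v i).1 ∈ R
          · rw [if_pos hhit]
            obtain ⟨i, hi⟩ := hhit
            have hi0 : i = 0 := Subsingleton.elim i 0
            have hne : (v 0).1 ≠ u := fun hc => hu (hc ▸ (hi0 ▸ hi))
            rw [List.ofFn_succ, cylProb_head_ne σ _ _ _ _ hne]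
          · rw [if_neg hhit]
        rw [Finset.sum_congr rfl fun v _ => hpt v]
        simp [rpS, hu]
  | succ n ih =>
      intro h u
      by_cases hu : u ∈ R
      · have hpt : ∀ v : Fin (n + 2) → S × A,
            (if ∃ i, (v i).1 ∈ R then cylProb M σ h u (List.ofFn v) else 0) =
              cylProb M σ h u (List.ofFn v) := by
          intro v
          by_cases hhit : ∃ i : Fin (n + 2), (v i).1 ∈ R
          · rw [if_pos hhit]
          · rw [if_neg hhit]
            have h0 : (v 0).1 ∉ R := fun hc => hhit ⟨0, hc⟩
            have hne : (v 0).1 ≠ u := fun hc => h0 (hc ▸ hu)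
            rw [List.ofFn_succ, cylProb_head_ne σ _ _ _ _ hne]
        rw [Finset.sum_congr rfl fun v _ => hpt v, cylProb_total σ (n + 2) h u]
        simp [rpS, hu]
      · rw [sum_pi_fin_succ]
        have hinner : ∀ x : S × A,
            (∑ w : Fin (n + 1) → S × A,
              if ∃ i, ((Fin.cons x w : Fin (n + 2) → S × A) i).1 ∈ R then
                cylProb M σ h u (List.ofFn (Fin.cons x w)) else 0) =
            if x.1 = u then
              (σ.act h u) x.2 *
                ∑ s' : S, (M.trans u x.2) s' * rpS M σ R n (h ++ [(u, x.2)]) s'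
            else 0 := by
          intro x
          by_cases hxu : x.1 = u
          · rw [if_pos hxu]
            have hxR : x.1 ∉ R := hxu ▸ hu
            have hcond : ∀ w : Fin (n + 1) → S × A,
                (∃ i, ((Fin.cons x w : Fin (n + 2) → S × A) i).1 ∈ R) ↔
                  ∃ j, (w j).1 ∈ R := by
              intro w
              rw [Fin.exists_fin_succ]
              simp only [Fin.cons_zero, Fin.cons_succ]
              exact ⟨fun hc => hc.resolve_left hxR, Or.inr⟩
            have hcyl : ∀ w : Fin (n + 1) → S × A,
                cylProb M σ h u (List.ofFn (Fin.cons x w)) =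
                  (σ.act h u) x.2 *
                    ∑ s' : S, (M.trans u x.2) s' * cylProb M σ (h ++ [(u, x.2)]) s' (List.ofFn w) := by
              intro w
              obtain ⟨t, a⟩ := x
              have ht : t = u := hxu
              subst ht
              rw [List.ofFn_succ]
              simp only [Fin.cons_zero, Fin.cons_succ, cylProb, tsum_fintype, if_pos rfl]
              simp
            calc (∑ w : Fin (n + 1) → S × A,
                  if ∃ i, ((Fin.cons x w : Fin (n + 2) → S × A) i).1 ∈ R then
                    cylProb M σ h u (List.ofFn (Fin.cons x w)) else 0)
                = ∑ w : Fin (n + 1) → S × A, (σ.act h u) x.2 *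
                    ∑ s' : S, (M.trans u x.2) s' *
                      (if ∃ j, (w j).1 ∈ R then
                        cylProb M σ (h ++ [(u, x.2)]) s' (List.ofFn w) else 0) := by
                  refine Finset.sum_congr rfl fun w _ => ?_
                  by_cases hw : ∃ j, (w j).1 ∈ R
                  · rw [if_pos ((hcond w).mpr hw), hcyl w]
                    congr 1
                    refine Finset.sum_congr rfl fun s' _ => ?_
                    rw [if_pos hw]
                  · rw [if_neg (fun hc => hw ((hcond w).mp hc))]
                    simp only [if_neg hw, mul_zero, Finset.sum_const_zero]
              _ = (σ.act h u) x.2 *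
                    ∑ s' : S, (M.trans u x.2) s' * rpS M σ R n (h ++ [(u, x.2)]) s' := by
                  rw [← Finset.mul_sum, Finset.sum_comm]
                  congr 1
                  refine Finset.sum_congr rfl fun s' _ => ?_
                  rw [← Finset.mul_sum, ih (h ++ [(u, x.2)]) s']
          · rw [if_neg hxu]
            refine Finset.sum_eq_zero fun w _ => ?_
            have hz : cylProb M σ h u (List.ofFn (Fin.cons x w)) = 0 := by
              rw [List.ofFn_succ]
              simp only [Fin.cons_zero, Fin.cons_succ]
              exact cylProb_head_ne σ _ _ _ _ hxu
            rw [hz, ite_self]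
        rw [Finset.sum_congr rfl fun x _ => hinner x]
        rw [Fintype.sum_prod_type, Finset.sum_comm]
        simp only [Finset.sum_ite_eq', Finset.mem_univ, if_true]
        rw [rpS, if_neg hu]

lemma mem_cyl_ofFn {k : ℕ} (v : Fin k → S × A) (ω : Traj S A) :
    ω ∈ Cyl (List.ofFn v) ↔ ∀ i : Fin k, ω i = v i := by
  constructor
  · intro hω i
    have := hω (Fin.cast (List.length_ofFn (f := v)).symm i)
    rwa [List.get_ofFn, Fin.cast_cast, Fin.cast_eq_self, Fin.coe_cast] at this
  · intro hω i
    rw [List.get_ofFn]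
    have := hω (Fin.cast (List.length_ofFn (f := v)) i)
    rwa [Fin.coe_cast] at this

lemma measurableSet_cyl (pre : List (S × A)) : MeasurableSet (Cyl pre) := by
  have hset : Cyl pre = ⋂ i : Fin pre.length, (fun ω : Traj S A => ω (i : ℕ)) ⁻¹' {pre.get i} := by
    ext ω
    simp only [Cyl, Set.mem_setOf_eq, Set.mem_iInter, Set.mem_preimage, Set.mem_singleton_iff]
  rw [hset]
  refine MeasurableSet.iInter fun i => ?_
  have hm : @Measurable (Traj S A) (S × A) _ ⊤ (fun ω => ω (i : ℕ)) :=
    @measurable_pi_apply ℕ (fun _ => S × A) (fun _ => ⊤) (i : ℕ)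
  exact hm (by trivial)

lemma cyl_disjoint {k : ℕ} {v v' : Fin k → S × A} (hvv : v ≠ v') :
    Disjoint (Cyl (List.ofFn v)) (Cyl (List.ofFn v')) := by
  rw [Set.disjoint_iff_inter_eq_empty]
  ext ω
  simp only [Set.mem_inter_iff, Set.mem_empty_iff_false, iff_false, not_and]
  intro h1 h2
  rw [mem_cyl_ofFn] at h1 h2
  exact hvv (funext fun i => (h1 i).symm.trans (h2 i))

lemma reachN_eq_biUnion (n : ℕ) (R : Set S) :
    (ReachN n R : Set (Traj S A)) =
      ⋃ v ∈ Finset.univ.filter (fun v : Fin (n + 1) → S × A => ∃ i, (v i).1 ∈ R),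
        Cyl (List.ofFn v) := by
  ext ω
  simp only [ReachN, Set.mem_setOf_eq, Set.mem_iUnion, Finset.mem_filter, Finset.mem_univ,
    true_and]
  constructor
  · rintro ⟨i, hin, hiR⟩
    refine ⟨fun j => ω j, ⟨⟨⟨i, by omega⟩, hiR⟩, ?_⟩⟩
    rw [mem_cyl_ofFn]
    intro j; rfl
  · rintro ⟨v, ⟨⟨i, hiR⟩, hω⟩⟩
    rw [mem_cyl_ofFn] at hω
    exact ⟨i, by omega, by rw [← hω i] at hiR; exact hiR⟩

variable {P : Strategy M → S → Measure (Traj S A)}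

lemma measure_reachN (hP : IsPathMeasure M P) (σ : Strategy M) (s0 : S) (n : ℕ) (R : Set S) :
    P σ s0 (ReachN n R) = rpS M σ R n [] s0 := by
  rw [reachN_eq_biUnion n R,
    measure_biUnion_finset ?hd (fun v _ => measurableSet_cyl (List.ofFn v))]
  case hd =>
    intro v hv v' hv' hvv
    exact cyl_disjoint hvv
  rw [Finset.sum_filter]
  rw [← sum_hit_eq_rpS σ R n [] s0]
  refine Finset.sum_congr rfl fun v _ => ?_
  by_cases hv : ∃ i, (v i).1 ∈ R
  · rw [if_pos hv, if_pos hv, hP.2 σ s0 (List.ofFn v)]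
  · rw [if_neg hv, if_neg hv]

lemma measure_reach_eq_iSup (σ : Strategy M) (s0 : S) (R : Set S) :
    P σ s0 (Reach R) = ⨆ n, P σ s0 (ReachN n R) := by
  have hset : (Reach R : Set (Traj S A)) = ⋃ n, ReachN n R := by
    ext ω
    simp only [Reach, ReachN, Set.mem_setOf_eq, Set.mem_iUnion]
    exact ⟨fun ⟨i, hi⟩ => ⟨i, i, le_rfl, hi⟩, fun ⟨n, i, _, hi⟩ => ⟨i, hi⟩⟩
  rw [hset]
  refine (Monotone.directed_le ?_).measure_iUnion
  intro m n hmn ω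
  simp only [ReachN, Set.mem_setOf_eq]
  rintro ⟨i, him, hiR⟩
  exact ⟨i, him.trans hmn, hiR⟩

end Bridge


end Aux

/-- If `(T, B)` is a maximal end component of the finite MDP `M` and some
state `s ∈ T` satisfies `P^max[Reach {s}] ≥ ε`, then `T ⊆ C` for every `ε`-core `C` of `M`. -/
theorem mec_subset_of_core {S A : Type*} [Fintype S] [Fintype A] [DecidableEq S]
    (M : MDP S A) (P : Strategy M → S → Measure (Traj S A)) (hP : IsPathMeasure M P)
    (ε : ℝ) (hε : 0 < ε) (T : Set S) (B : Set A) (hMEC : IsMEC M T B)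
    (s : S) (hs : s ∈ T)
    (hreach : ENNReal.ofReal ε ≤ pmax M P M.init (Reach ({s} : Set S))) :
    ∀ C : Set S, IsCore M P ε C → T ⊆ C := by
  classical
  intro C hC x hx
  by_contra hxC
  have hEC : IsEndComponent M T B := hMEC.1
  set β := pmax M P M.init (Reach (Cᶜ : Set S)) with hβdef
  have hβ : β < ENNReal.ofReal ε := hC
  have hβtop : β ≠ ⊤ := ne_top_of_lt (lt_of_lt_of_le hβ le_top)
  -- a strategy almost achieving the sup for reaching s
  have hσ0 : ∃ σ0 : Strategy M, β < P σ0 M.init (Reach ({s} : Set S)) := by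
    rw [← lt_iSup_iff]
    exact lt_of_lt_of_le hβ hreach
  obtain ⟨σ0, hσ0⟩ := hσ0
  rw [measure_reach_eq_iSup σ0 M.init ({s} : Set S), lt_iSup_iff] at hσ0
  obtain ⟨n, hn⟩ := hσ0
  rw [measure_reachN hP σ0 M.init n ({s} : Set S)] at hn
  set r := rpS M σ0 ({s} : Set S) n [] M.init with hrdef
  have hr1 : r ≤ 1 := rpS_le_one σ0 _ _ _ _
  have hη : (0 : ENNReal) < r - β := tsub_pos_iff_lt.mpr hn
  obtain ⟨m, hm⟩ := ec_mp_small hEC hx hs hη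
  set μ := mpM M (ecPMF M B) ({x} : Set S) m s with hμdef
  have hμ1 : μ ≤ 1 := mpM_le_one _ _ _ _
  have hμtop : μ ≠ ⊤ := ne_top_of_le_ne_top ENNReal.one_ne_top hμ1
  have hrpμ : rpM M (ecPMF M B) ({x} : Set S) m s = 1 - μ := by
    have hsum := rpM_add_mpM (M := M) (ecPMF M B) ({x} : Set S) m s
    exact ENNReal.eq_sub_of_add_eq hμtop hsum
  set σ1 := switchStrat M σ0 (ecPMF M B) (ecPMF_avail (M := M) B) s with hσ1def
  -- lower bound on the probability of leaving the core under σ1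
  have hchain : r * (1 - μ) ≤ P σ1 M.init (Reach (Cᶜ : Set S)) := by
    calc r * (1 - μ)
        = rpS M σ0 ({s} : Set S) n [] M.init * rpM M (ecPMF M B) ({x} : Set S) m s := by
          rw [hrpμ]
      _ ≤ rpS M σ1 ({x} : Set S) (n + m) [] M.init :=
          rpS_switch_main σ0 (ecPMF M B) (ecPMF_avail (M := M) B) s x n m [] M.init (by simp)
      _ = P σ1 M.init (ReachN (n + m) ({x} : Set S)) :=
          (measure_reachN hP σ1 M.init (n + m) ({x} : Set S)).symm
      _ ≤ P σ1 M.init (Reach ({x} : Set S)) := by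
          refine measure_mono ?_
          rintro ω ⟨i, _, hi⟩
          exact ⟨i, hi⟩
      _ ≤ P σ1 M.init (Reach (Cᶜ : Set S)) := by
          refine measure_mono ?_
          rintro ω ⟨i, hi⟩
          refine ⟨i, ?_⟩
          have : (ω i).1 = x := hi
          rw [this]
          exact hxC
  have hPβ : P σ1 M.init (Reach (Cᶜ : Set S)) ≤ β :=
    le_iSup (fun σ => P σ M.init (Reach (Cᶜ : Set S))) σ1
  -- β < r * (1 - μ)
  have hβlt : β < r * (1 - μ) := by
    have h1 : β + μ < r := by
      calc β + μ < β + (r - β) := ENNReal.add_lt_add_left hβtop hm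
        _ = r := add_tsub_cancel_of_le (le_of_lt hn)
    have h2 : β < r - μ := lt_tsub_iff_right.mpr h1
    have h3 : r - μ ≤ r * (1 - μ) := by
      rw [tsub_le_iff_right]
      calc r = r * ((1 - μ) + μ) := by rw [tsub_add_cancel_of_le hμ1, mul_one]
        _ = r * (1 - μ) + r * μ := by rw [mul_add]
        _ ≤ r * (1 - μ) + μ := by
            refine add_le_add_right ?_ _
            calc r * μ ≤ 1 * μ := mul_le_mul_left hr1 μ
              _ = μ := one_mul μ
    exact lt_of_lt_of_le h2 h3
  exact absurd (lt_of_lt_of_le hβlt (hchain.trans hPβ)) (lt_irrefl β)
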